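/- Under the assumptions of the blended gradient descent proposition, if additionally ρ/η ≥ L + c for some c > 0 and w^t minimizes ‖w − w_f^t‖² over Q, then the sufficient descent property holds: f(w^{t+1}) − f(w^t) ≤ −(c/2)‖w^{t+1} − w^t‖². -/

import Mathlib

open scoped NNReal
open scoped RealInnerProductSpace

/-- Descent lemma: quadratic upper bound for a function with Lipschitz gradient. -/
lemma descent_lemma {M : ℕ} (f : EuclideanSpace ℝ (Fin M) → ℝ)
    (hf : Differentiable ℝ f) (L : ℝ≥0) (hL : LipschitzWith L (gradient f))
    (x y : EuclideanSpace ℝ (Fin M)) :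
    f y ≤ f x + ⟪gradient f x, y - x⟫ + (L : ℝ) / 2 * ‖y - x‖ ^ 2 := by
  set v := y - x with hv
  have hline : ∀ t : ℝ, HasDerivAt (fun t : ℝ => x + t • v) v t := by
    intro t
    simpa using ((hasDerivAt_id t).smul_const v).const_add x
  have hφ : ∀ t : ℝ, HasDerivAt (fun t : ℝ => f (x + t • v))
      (⟪gradient f (x + t • v), v⟫) t := by
    intro t
    have h1 := ((hf (x + t • v)).hasGradientAt.hasFDerivAt).comp_hasDerivAt t (hline t)
    simpa [InnerProductSpace.toDual_apply_apply, Function.comp_def] using h1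
  have hcont : Continuous fun t : ℝ => ⟪gradient f (x + t • v), v⟫ := by
    exact Continuous.inner
      (hL.continuous.comp (continuous_const.add (continuous_id.smul continuous_const)))
      continuous_const
  have hint : IntervalIntegrable (fun t : ℝ => ⟪gradient f (x + t • v), v⟫)
      MeasureTheory.volume 0 1 := hcont.intervalIntegrable 0 1
  have key : ∫ t in (0:ℝ)..1, ⟪gradient f (x + t • v), v⟫ = f y - f x := by
    have h := intervalIntegral.integral_eq_sub_of_hasDerivAt (fun t _ => hφ t) hint
    simpa [hv] using h
  have hbound : ∀ t ∈ Set.Icc (0:ℝ) 1,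
      ⟪gradient f (x + t • v), v⟫ ≤ ⟪gradient f x, v⟫ + (L : ℝ) * ‖v‖ ^ 2 * t := by
    intro t ht
    have h1 : ⟪gradient f (x + t • v) - gradient f x, v⟫ ≤
        ‖gradient f (x + t • v) - gradient f x‖ * ‖v‖ := real_inner_le_norm _ _
    have h2 : ‖gradient f (x + t • v) - gradient f x‖ ≤ (L : ℝ) * ‖t • v‖ := by
      have := hL.dist_le_mul (x + t • v) x
      simpa [dist_eq_norm, add_sub_cancel_left] using this
    have h3 : ‖t • v‖ = t * ‖v‖ := by
      rw [norm_smul]; simp [abs_of_nonneg ht.1]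
    have h4 : ⟪gradient f (x + t • v) - gradient f x, v⟫ =
        ⟪gradient f (x + t • v), v⟫ - ⟪gradient f x, v⟫ := inner_sub_left _ _ _
    have h5 : ‖gradient f (x + t • v) - gradient f x‖ * ‖v‖ ≤ ((L : ℝ) * (t * ‖v‖)) * ‖v‖ := by
      rw [h3] at h2
      exact mul_le_mul_of_nonneg_right h2 (norm_nonneg v)
    nlinarith [norm_nonneg v]
  have hint2 : IntervalIntegrable (fun t : ℝ => ⟪gradient f x, v⟫ + (L : ℝ) * ‖v‖ ^ 2 * t)
      MeasureTheory.volume 0 1 :=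
    (by fun_prop : Continuous fun t : ℝ => ⟪gradient f x, v⟫ + (L : ℝ) * ‖v‖ ^ 2 * t).intervalIntegrable 0 1
  have hmono := intervalIntegral.integral_mono_on (by norm_num) hint hint2 hbound
  have hrhs : ∫ t in (0:ℝ)..1, (⟪gradient f x, v⟫ + (L : ℝ) * ‖v‖ ^ 2 * t)
      = ⟪gradient f x, v⟫ + (L : ℝ) / 2 * ‖v‖ ^ 2 := by
    rw [intervalIntegral.integral_add (intervalIntegrable_const)
      ((by fun_prop : Continuous fun t : ℝ => (L : ℝ) * ‖v‖ ^ 2 * t).intervalIntegrable 0 1),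
      intervalIntegral.integral_const_mul, integral_id]
    simp; ring
  rw [key] at hmono
  rw [hrhs] at hmono
  linarith

/-- Sufficient descent property of blended gradient descent when `ρ/η ≥ L + c`
and `w^t = proj_Q(w_f^t)`. -/
theorem bgd_sufficient_descent {M : ℕ}
    (f : EuclideanSpace ℝ (Fin M) → ℝ) (hf : Differentiable ℝ f)
    (L : ℝ≥0) (hL : LipschitzWith L (gradient f))
    (Q : Set (EuclideanSpace ℝ (Fin M))) (hQne : Q.Nonempty) (hQcl : IsClosed Q)
    (ρ η : ℝ) (hρ : ρ ∈ Set.Ioo (0 : ℝ) 1) (hη : 0 < η)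
    (c : ℝ) (hcpos : 0 < c) (hrate : (L : ℝ) + c ≤ ρ / η)
    (wt wf wf1 wt1 : EuclideanSpace ℝ (Fin M))
    (hwt : wt ∈ Q) (hprojt : ∀ w ∈ Q, ‖wt - wf‖ ≤ ‖w - wf‖)
    (hupdate : wf1 = (1 - ρ) • wf + ρ • wt - η • gradient f wt)
    (hwt1 : wt1 ∈ Q) (hproj : ∀ w ∈ Q, ‖wt1 - wf1‖ ≤ ‖w - wf1‖) :
    f wt1 - f wt ≤ -(c / 2) * ‖wt1 - wt‖ ^ 2 := by
  set g := gradient f wt with hg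
  set a := wt1 - wt with ha
  set d := wt - wf with hd
  have hb : wt - wf1 = (1 - ρ) • d + η • g := by
    rw [hupdate, hd]
    module
  -- inequality 1 : ‖a‖² + 2⟪a, wt - wf1⟫ ≤ 0
  have h1 : ‖a‖ ^ 2 + 2 * ⟪a, wt - wf1⟫ ≤ 0 := by
    have hle : ‖wt1 - wf1‖ ≤ ‖wt - wf1‖ := hproj wt hwt
    have hsq : ‖wt1 - wf1‖ ^ 2 ≤ ‖wt - wf1‖ ^ 2 :=
      pow_le_pow_left₀ (norm_nonneg _) hle 2
    have hdecomp : wt1 - wf1 = a + (wt - wf1) := by rw [ha]; abel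
    rw [hdecomp, norm_add_sq_real] at hsq
    linarith
  -- inequality 2 : ⟪a, d⟫ ≥ -‖a‖²/2
  have h2 : -(‖a‖ ^ 2) / 2 ≤ ⟪a, d⟫ := by
    have hle : ‖wt - wf‖ ≤ ‖wt1 - wf‖ := hprojt wt1 hwt1
    have hsq : ‖wt - wf‖ ^ 2 ≤ ‖wt1 - wf‖ ^ 2 :=
      pow_le_pow_left₀ (norm_nonneg _) hle 2
    have hdecomp : wt1 - wf = a + d := by rw [ha, hd]; abel
    rw [hdecomp, norm_add_sq_real, ← hd] at hsq
    linarith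
  have hsplit : ⟪a, wt - wf1⟫ = (1 - ρ) * ⟪a, d⟫ + η * ⟪a, g⟫ := by
    rw [hb, inner_add_right, real_inner_smul_right, real_inner_smul_right]
  have hinner : 2 * η * ⟪a, g⟫ ≤ -ρ * ‖a‖ ^ 2 := by
    rw [hsplit] at h1
    nlinarith [hρ.2]
  have hdesc := descent_lemma f hf L hL wt wt1
  have hsymm : ⟪g, a⟫ = ⟪a, g⟫ := real_inner_comm _ _
  rw [← ha, ← hg, hsymm] at hdesc
  have hLc : ((L : ℝ) + c) * η ≤ ρ := by
    have h8 := mul_le_mul_of_nonneg_right hrate hη.le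
    rwa [div_mul_cancel₀ _ (ne_of_gt hη)] at h8
  have h6 : ⟪a, g⟫ ≤ -((L : ℝ) + c) / 2 * ‖a‖ ^ 2 := by
    have h7 : 2 * η * ⟪a, g⟫ ≤ 2 * η * (-((L : ℝ) + c) / 2 * ‖a‖ ^ 2) := by
      nlinarith [mul_le_mul_of_nonneg_right hLc (sq_nonneg ‖a‖)]
    exact (mul_le_mul_iff_right₀ (by linarith : (0:ℝ) < 2 * η)).mp h7
  linarith [hdesc, h6]
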